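/- Let n ≥ 1, let S ⊆ ℤ^n be a finite nonempty set, and let P = convexHull ℝ S ⊆ ℝ^n have nonempty interior (i.e. dim P = n). Then the limit as m → ∞ (m ranging over positive natural numbers) of #((m·P) ∩ ℤ^n) / m^n exists and equals the Lebesgue measure of P. Equivalently, the mixed volume Vol(P) := n!·(Euclidean volume of P) satisfies Vol(P) = n!·lim_{m→∞} #((m·P) ∩ ℤ^n)/m^n. -/

import Mathlib

open MeasureTheory Pointwise Set Metric Filter Topology ENNReal

noncomputable section

lemma aux_inter_frontier {X : Type*} [TopologicalSpace X] {t s : Set X}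
    (ht : IsPreconnected t) (h1 : (t ∩ s).Nonempty) (h2 : (t \ s).Nonempty) :
    (t ∩ frontier s).Nonempty := by
  by_contra h
  rw [Set.not_nonempty_iff_eq_empty] at h
  have hnf : ∀ x ∈ t, x ∉ frontier s := fun x hx hf => by
    have : x ∈ t ∩ frontier s := ⟨hx, hf⟩
    simp [h] at this
  have hsub : t ⊆ interior s ∪ interior sᶜ := by
    intro x hx
    rcases em (x ∈ closure s) with hc | hc
    · left
      have := hnf x hx
      rw [frontier, Set.mem_diff] at this
      simpa [hc] using this
    · right
      rwa [interior_compl, Set.mem_compl_iff]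
  have hy : (t ∩ interior s).Nonempty := by
    obtain ⟨y, hyt, hys⟩ := h1
    rcases hsub hyt with h' | h'
    · exact ⟨y, hyt, h'⟩
    · exact absurd hys (by simpa using interior_subset h')
  have hz : (t ∩ interior sᶜ).Nonempty := by
    obtain ⟨z, hzt, hzs⟩ := h2
    rcases hsub hzt with h' | h'
    · exact absurd (interior_subset h') hzs
    · exact ⟨z, hzt, h'⟩
  obtain ⟨w, -, hw1, hw2⟩ := ht (interior s) (interior sᶜ) isOpen_interior isOpen_interior hsub hy hz
  exact (interior_subset hw2) (interior_subset hw1)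

lemma aux_frontier_dist {E : Type*} [NormedAddCommGroup E] [NormedSpace ℝ E] {s : Set E} {y v : E}
    (hy : y ∈ s) (hv : v ∉ s) : ∃ w ∈ frontier s, dist y w ≤ dist y v := by
  obtain ⟨w, hwseg, hwf⟩ := aux_inter_frontier (convex_segment y v).isPreconnected
    ⟨y, left_mem_segment ℝ y v, hy⟩ ⟨v, right_mem_segment ℝ y v, hv⟩
  refine ⟨w, hwf, ?_⟩
  obtain ⟨a, b, ha, hb, hab, rfl⟩ := hwseg
  have h2 : y - (a • y + b • v) = b • (y - v) := by
    have h3 : y = a • y + b • y := by rw [← add_smul, hab, one_smul]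
    rw [smul_sub]; nth_rewrite 1 [h3]; abel
  rw [dist_eq_norm, h2, norm_smul, Real.norm_of_nonneg hb, dist_eq_norm]
  nlinarith [norm_nonneg (y - v)]

def auxCube (n m : ℕ) (x : Fin n → ℤ) : Set (Fin n → ℝ) :=
  Set.univ.pi fun j => Set.Ico ((x j : ℝ)/m) (((x j : ℝ) + 1)/m)

lemma auxCube_mem_iff {n m : ℕ} (hm : 0 < m) {x : Fin n → ℤ} {y : Fin n → ℝ} :
    y ∈ auxCube n m x ↔ ∀ j, ⌊(m : ℝ) * y j⌋ = x j := by
  have hm' : (0:ℝ) < m := by exact_mod_cast hm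
  simp only [auxCube, Set.mem_pi, Set.mem_univ, forall_true_left, Set.mem_Ico]
  refine forall_congr' fun j => ?_
  rw [Int.floor_eq_iff, div_le_iff₀ hm', lt_div_iff₀ hm']
  constructor
  · rintro ⟨h1, h2⟩; constructor <;> nlinarith
  · rintro ⟨h1, h2⟩; constructor <;> nlinarith

lemma auxCube_volume {n m : ℕ} (x : Fin n → ℤ) :
    volume (auxCube n m x) = (ENNReal.ofReal (1 / m)) ^ n := by
  rw [auxCube, volume_pi_pi]
  have h : ∀ j : Fin n, volume (Set.Ico ((x j : ℝ)/m) (((x j : ℝ) + 1)/m))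
      = ENNReal.ofReal (1 / m) := by
    intro j
    rw [Real.volume_Ico]
    congr 1
    rw [div_sub_div_same]
    ring_nf
  simp [h, Finset.prod_const]

lemma auxCube_dist {n m : ℕ} (hm : 0 < m) {x : Fin n → ℤ} {y : Fin n → ℝ}
    (hy : y ∈ auxCube n m x) : dist y (fun j => (x j : ℝ)/m) ≤ 1 / m := by
  have hm' : (0:ℝ) < m := by exact_mod_cast hm
  rw [dist_pi_le_iff (by positivity)]
  intro j
  have h := hy j (Set.mem_univ j)
  simp only [Set.mem_Ico] at h
  rw [Real.dist_eq, abs_le]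
  have heq : ((x j : ℝ) + 1)/m = (x j : ℝ)/m + 1/m := by rw [add_div]
  rw [heq] at h
  constructor
  · have : (0:ℝ) ≤ 1/m := by positivity
    linarith [h.1]
  · linarith [h.2]

lemma auxCube_measurable {n m : ℕ} (x : Fin n → ℤ) : MeasurableSet (auxCube n m x) :=
  MeasurableSet.univ_pi fun _ => measurableSet_Ico

/-- Ehrhart-type limit: for a full-dimensional lattice polytope
`P = conv(S) ⊆ ℝ^n`, the number of lattice points in the dilate `m·P`, divided
by `m^n`, converges as `m → ∞` to the Lebesgue (Euclidean) volume of `P`.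
Equivalently, `Vol(P) = n! · lim_m #((m·P) ∩ ℤ^n)/m^n` where `Vol` is the mixed
volume (`n!` times Euclidean volume). -/
theorem stmt4 (n : ℕ) (hn : 1 ≤ n) (S : Finset (Fin n → ℤ)) (hS : S.Nonempty)
    (P : Set (Fin n → ℝ))
    (hP : P = convexHull ℝ ((fun (v : Fin n → ℤ) (j : Fin n) => (v j : ℝ)) '' S))
    (hfull : (interior P).Nonempty) :
    Filter.Tendsto
      (fun m : ℕ =>
        (({x : Fin n → ℤ | (fun j => (x j : ℝ)) ∈ (m : ℝ) • P}.ncard : ℝ)) / (m : ℝ) ^ n)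
      Filter.atTop (nhds (volume P).toReal) := by
  classical
  have hPconv : Convex ℝ P := hP ▸ convex_convexHull ℝ _
  have hPcpt : IsCompact P := by
    rw [hP]; exact (S.finite_toSet.image _).isCompact_convexHull ℝ
  have hPfin : volume P ≠ ⊤ := hPcpt.measure_lt_top.ne
  have hFP : frontier P ⊆ P := by
    intro x hx
    have h := frontier_subset_closure (s := P) hx
    rwa [hPcpt.isClosed.closure_eq] at h
  have hFcpt : IsCompact (frontier P) := hPcpt.of_isClosed_subset isClosed_frontier hFP
  have hFvol : volume (frontier P) = 0 := hPconv.addHaar_frontier volume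
  set C : ℕ → Set (Fin n → ℝ) := fun m => cthickening (1/m) (frontier P) with hCdef
  have hCfin : ∀ m : ℕ, volume (C m) ≠ ⊤ := fun m => (hFcpt.cthickening).measure_lt_top.ne
  have hCtend : Tendsto (fun m : ℕ => volume (C m)) atTop (𝓝 0) := by
    have h1 : Tendsto (fun r : ℝ => volume (cthickening r (frontier P))) (𝓝 0)
        (𝓝 (volume (closure (frontier P)))) :=
      tendsto_measure_cthickening ⟨1, one_pos, (hFcpt.cthickening).measure_lt_top.ne⟩
    rw [isClosed_frontier.closure_eq, hFvol] at h1
    exact h1.comp tendsto_one_div_atTop_nhds_zero_nat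
  have hctend : Tendsto (fun m : ℕ => (volume (C m)).toReal) atTop (𝓝 0) := by
    have h := (ENNReal.tendsto_toReal (a := 0) (by simp)).comp hCtend
    exact h
  set T : ℕ → Set (Fin n → ℤ) :=
    fun m => {x : Fin n → ℤ | (fun j => (x j : ℝ)) ∈ (m : ℝ) • P} with hTdef
  -- finiteness of lattice point sets
  have hTfin : ∀ m : ℕ, (T m).Finite := by
    intro m
    obtain ⟨R, hR⟩ := isBounded_iff_forall_norm_le.mp (hPcpt.smul (m:ℝ)).isBounded
    apply Set.Finite.subset (Set.finite_Icc (fun _ : Fin n => -⌈R⌉) (fun _ => ⌈R⌉))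
    intro x hx
    have hxR : ∀ j, |(x j : ℝ)| ≤ R := by
      intro j
      have h1 := norm_le_pi_norm (fun j => (x j : ℝ)) j
      have h2 := hR _ hx
      simp only [Real.norm_eq_abs] at h1
      exact h1.trans h2
    constructor <;> intro j
    · have : (-⌈R⌉ : ℝ) ≤ (x j : ℝ) := by
        have := Int.le_ceil R
        have := (abs_le.mp (hxR j)).1
        push_cast
        linarith
      exact_mod_cast this
    · have : (x j : ℝ) ≤ (⌈R⌉ : ℝ) := by
        have := Int.le_ceil R
        have := (abs_le.mp (hxR j)).2
        linarith
      exact_mod_cast this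
  -- key estimates for m ≥ 1
  have key : ∀ m : ℕ, 1 ≤ m →
      (volume P).toReal - (volume (C m)).toReal ≤ ((T m).ncard : ℝ) / (m : ℝ) ^ n ∧
      ((T m).ncard : ℝ) / (m : ℝ) ^ n ≤ (volume P).toReal + (volume (C m)).toReal := by
    intro m hm
    have hm0 : 0 < m := hm
    have hm' : (0:ℝ) < m := by exact_mod_cast hm0
    set A : Set (Fin n → ℝ) := ⋃ x ∈ T m, auxCube n m x with hAdef
    -- volume of A
    have hAvol : volume A = ((T m).ncard : ℝ≥0∞) * (ENNReal.ofReal (1/m)) ^ n := by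
      have hAeq : A = ⋃ x ∈ (hTfin m).toFinset, auxCube n m x := by
        ext y; simp [hAdef, Set.Finite.mem_toFinset]
      rw [hAeq, measure_biUnion_finset]
      · rw [Finset.sum_congr rfl fun x _ => auxCube_volume x, Finset.sum_const,
          Set.ncard_eq_toFinset_card (T m) (hTfin m), nsmul_eq_mul]
      · intro x hx x' hx' hne
        simp only [Function.onFun]
        rw [Set.disjoint_left]
        intro y hy hy'
        apply hne
        funext j
        rw [← (auxCube_mem_iff hm0).mp hy j, ← (auxCube_mem_iff hm0).mp hy' j]
      · exact fun x _ => auxCube_measurable x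
    -- A ⊆ P ∪ C m
    have hA_sub : A ⊆ P ∪ C m := by
      intro y hy
      simp only [hAdef, Set.mem_iUnion] at hy
      obtain ⟨x, hxT, hyc⟩ := hy
      have hv : (fun j => (x j : ℝ)/m) ∈ P := by
        obtain ⟨p, hp, hpe⟩ := hxT
        have : (fun j => (x j : ℝ)/m) = p := by
          funext j
          have := congrFun hpe j
          simp only [Pi.smul_apply, smul_eq_mul] at this
          rw [← this]
          field_simp
        rwa [this]
      by_cases hyP : y ∈ P
      · exact Or.inl hyP
      · right
        obtain ⟨w, hwf, hwd⟩ := aux_frontier_dist (s := Pᶜ) hyP (by simpa using hv)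
        rw [frontier_compl] at hwf
        exact mem_cthickening_of_dist_le y w _ _ hwf (hwd.trans (auxCube_dist hm0 hyc))
    -- P ⊆ A ∪ C m
    have hP_sub : P ⊆ A ∪ C m := by
      intro y hy
      set x : Fin n → ℤ := fun j => ⌊(m : ℝ) * y j⌋ with hxdef
      have hyc : y ∈ auxCube n m x := (auxCube_mem_iff hm0).mpr fun j => rfl
      by_cases hvP : (fun j => (x j : ℝ)/m) ∈ P
      · left
        simp only [hAdef, Set.mem_iUnion]
        refine ⟨x, ⟨_, hvP, ?_⟩, hyc⟩
        funext j
        simp only [Pi.smul_apply, smul_eq_mul]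
        field_simp
      · right
        obtain ⟨w, hwf, hwd⟩ := aux_frontier_dist hy hvP
        exact mem_cthickening_of_dist_le y w _ _ hwf (hwd.trans (auxCube_dist hm0 hyc))
    -- measure inequalities
    have hvolA_le : volume A ≤ volume P + volume (C m) :=
      (measure_mono hA_sub).trans (measure_union_le _ _)
    have hvolP_le : volume P ≤ volume A + volume (C m) :=
      (measure_mono hP_sub).trans (measure_union_le _ _)
    have hAfin : volume A ≠ ⊤ :=
      (hvolA_le.trans_lt (by
        rw [lt_top_iff_ne_top]
        exact ENNReal.add_ne_top.mpr ⟨hPfin, hCfin m⟩)).ne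
    have hAtoReal : (volume A).toReal = ((T m).ncard : ℝ) / (m : ℝ) ^ n := by
      rw [hAvol, ENNReal.toReal_mul, ENNReal.toReal_pow, ENNReal.toReal_ofReal (by positivity),
        ENNReal.toReal_natCast, one_div, inv_pow, ← div_eq_mul_inv]
    constructor
    · have h1 : (volume P).toReal ≤ (volume A).toReal + (volume (C m)).toReal := by
        rw [← ENNReal.toReal_add hAfin (hCfin m)]
        exact ENNReal.toReal_mono (ENNReal.add_ne_top.mpr ⟨hAfin, hCfin m⟩) hvolP_le
      rw [← hAtoReal]; linarith
    · have h1 : (volume A).toReal ≤ (volume P).toReal + (volume (C m)).toReal := by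
        rw [← ENNReal.toReal_add hPfin (hCfin m)]
        exact ENNReal.toReal_mono (ENNReal.add_ne_top.mpr ⟨hPfin, hCfin m⟩) hvolA_le
      rw [← hAtoReal]; linarith
  -- squeeze
  have hlow : Tendsto (fun m : ℕ => (volume P).toReal - (volume (C m)).toReal) atTop
      (𝓝 ((volume P).toReal)) := by
    have h := tendsto_const_nhds (x := (volume P).toReal) (f := atTop (α := ℕ)) |>.sub hctend
    simpa using h
  have hhigh : Tendsto (fun m : ℕ => (volume P).toReal + (volume (C m)).toReal) atTop
      (𝓝 ((volume P).toReal)) := by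
    have h := tendsto_const_nhds (x := (volume P).toReal) (f := atTop (α := ℕ)) |>.add hctend
    simpa using h
  refine tendsto_of_tendsto_of_tendsto_of_le_of_le' hlow hhigh ?_ ?_
  · filter_upwards [eventually_ge_atTop 1] with m hm
    exact (key m hm).1
  · filter_upwards [eventually_ge_atTop 1] with m hm
    exact (key m hm).2

end
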